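/- Let v ∈ ℝ with v ≠ 0, let w ∈ ℂ, and let L ∈ ℂ with Re L = 1/(2|v|). Assume 1 − conj(w)·L ≠ 0 and set θ_F := 1/(1 − conj(w)·L). Then Re( conj(w)·θ_F ) = ( Re w − |w|²/(2|v|) )·|θ_F|². Moreover, setting r_a^F := −Re(w)·|θ_F|²/|v|, r_t^F := 1 + Re(conj(w)·θ_F)/|v| + |w|²|θ_F|²/(4v²), and r_r^F := |w|²|θ_F|²/(4v²), one has r_a^F + r_t^F + r_r^F = 1. -/

import Mathlib

open Complex

/-- For `v ≠ 0`, `w, L ∈ ℂ` with `Re L = 1/(2|v|)`, `1 - w̄ L ≠ 0` and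
`θ_F = 1/(1 - w̄ L)`: `Re(w̄ θ_F) = (Re w - |w|²/(2|v|))|θ_F|²`, and the controlled rates
`r_a^F = -Re(w)|θ_F|²/|v|`, `r_t^F = 1 + Re(w̄ θ_F)/|v| + |w|²|θ_F|²/(4v²)`,
`r_r^F = |w|²|θ_F|²/(4v²)` sum to `1`. -/
theorem controlled_rates_sum_one (v : ℝ) (hv : v ≠ 0) (w L : ℂ)
    (hL : L.re = 1 / (2 * |v|))
    (hden : 1 - (starRingEnd ℂ) w * L ≠ 0)
    (θF : ℂ) (hθF : θF = 1 / (1 - (starRingEnd ℂ) w * L))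
    (raF rtF rrF : ℝ)
    (hra : raF = -w.re * ‖θF‖ ^ 2 / |v|)
    (hrt : rtF = 1 + ((starRingEnd ℂ) w * θF).re / |v|
      + ‖w‖ ^ 2 * ‖θF‖ ^ 2 / (4 * v ^ 2))
    (hrr : rrF = ‖w‖ ^ 2 * ‖θF‖ ^ 2 / (4 * v ^ 2)) :
    ((starRingEnd ℂ) w * θF).re
      = (w.re - ‖w‖ ^ 2 / (2 * |v|)) * ‖θF‖ ^ 2 ∧
    raF + rtF + rrF = 1 := by
  set D : ℂ := 1 - (starRingEnd ℂ) w * L with hD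
  have hnsq : Complex.normSq D ≠ 0 := by
    simpa [Complex.normSq_eq_zero] using hden
  have habs : ‖θF‖ ^ 2 = 1 / Complex.normSq D := by
    rw [hθF]
    simp [map_div₀, div_pow, Complex.sq_norm]
  have h1 : ((starRingEnd ℂ) w * θF).re
      = (w.re - ‖w‖ ^ 2 / (2 * |v|)) * ‖θF‖ ^ 2 := by
    rw [hθF] at habs
    rw [hθF, mul_one_div, Complex.div_re, habs, Complex.sq_norm]
    simp only [Complex.conj_re, Complex.conj_im]
    have hDre : D.re = 1 - (w.re * L.re + w.im * L.im) := by
      simp [hD, Complex.sub_re, Complex.mul_re]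
    have hDim : D.im = -(w.re * L.im - w.im * L.re) := by
      simp [hD, Complex.sub_im, Complex.mul_im]; ring
    have hwsq : Complex.normSq w = w.re ^ 2 + w.im ^ 2 := by
      rw [Complex.normSq_apply]; ring
    rw [hDre, hDim, hwsq, hL]
    have hv' : |v| ≠ 0 := abs_ne_zero.mpr hv
    field_simp
    ring
  refine ⟨h1, ?_⟩
  have hv2 : |v| ^ 2 = v ^ 2 := _root_.sq_abs v
  have hv' : |v| ≠ 0 := abs_ne_zero.mpr hv
  rw [hra, hrt, hrr, h1]
  rcases abs_choice v with h | h <;> rw [h] <;> field_simp <;> ring
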